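/- For each i ∈ {1,…,n−1}, the prescribed matrix of operators π_{s_i}(u^k_l) on ℓ²(ℕ) (with entries √(1−q^{2N+2})S, S*√(1−q^{2N+2}), ±q^{N+1}, ±q^N at the specified positions and δ_{kl} elsewhere) defines a 2n×2n matrix U over B(ℓ²(ℕ)) which is unitary: U*U = UU* = 1 in M_{2n}(B(ℓ²(ℕ))). -/

import Mathlib

noncomputable section

abbrev H : Type := lp (fun _ : ℕ => ℂ) 2

/-- The standard orthonormal basis vectors of `ℓ²(ℕ)`. -/
def e (n : ℕ) : H := lp.single 2 n 1

lemma inner_e_left (k : ℕ) (f : H) : inner ℂ (e k) f = (f : ∀ _ : ℕ, ℂ) k := by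
  simp [e, lp.inner_single_left]

lemma inner_e_e (j k : ℕ) : (inner ℂ (e j) (e k) : ℂ) = if j = k then 1 else 0 := by
  rw [inner_e_left]
  by_cases h : j = k
  · subst h; simp [e, lp.single_apply_self]
  · simp [e, lp.single_apply, Ne.symm h, h]

lemma vec_ext {v w : H} (h : ∀ k : ℕ, (inner ℂ (e k) v : ℂ) = inner ℂ (e k) w) : v = w := by
  apply lp.ext
  funext k
  simpa [inner_e_left] using h k

lemma clm_ext {A B : H →L[ℂ] H} (h : ∀ m : ℕ, A (e m) = B (e m)) : A = B := by
  refine ContinuousLinearMap.ext fun f => ?_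
  have hf : HasSum (fun k : ℕ => lp.single 2 k ((f : ∀ _ : ℕ, ℂ) k)) f :=
    lp.hasSum_single ENNReal.ofNat_ne_top f
  have key : ∀ k : ℕ, lp.single (E := fun _ : ℕ => ℂ) 2 k ((f : ∀ _ : ℕ, ℂ) k)
      = ((f : ∀ _ : ℕ, ℂ) k) • e k := by
    intro k
    rw [e, ← lp.single_smul (E := fun _ : ℕ => ℂ) 2 k ((f : ∀ _ : ℕ, ℂ) k) (1:ℂ), smul_eq_mul, mul_one]
  have hA : HasSum (fun k : ℕ => A (lp.single 2 k ((f : ∀ _ : ℕ, ℂ) k))) (A f) := hf.mapL A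
  have hB : HasSum (fun k : ℕ => B (lp.single 2 k ((f : ∀ _ : ℕ, ℂ) k))) (B f) := hf.mapL B
  refine hA.unique ?_
  convert hB using 2 with k
  rw [key, map_smul, map_smul, h]

lemma adjoint_shift (S : H →L[ℂ] H) (hS0 : S (e 0) = 0) (hS : ∀ m : ℕ, S (e (m + 1)) = e m) :
    ∀ m : ℕ, (ContinuousLinearMap.adjoint S) (e m) = e (m + 1) := by
  intro m
  apply vec_ext
  intro k
  rw [ContinuousLinearMap.adjoint_inner_right]
  cases k with
  | zero => simp [hS0, inner_e_e]
  | succ j => simp [hS, inner_e_e]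

lemma adjoint_diag (A : H →L[ℂ] H) (c : ℕ → ℝ)
    (hA : ∀ m : ℕ, A (e m) = ((c m : ℝ) : ℂ) • e m) :
    ContinuousLinearMap.adjoint A = A := by
  apply clm_ext
  intro m
  apply vec_ext
  intro k
  rw [ContinuousLinearMap.adjoint_inner_right, hA, hA, inner_smul_left, inner_smul_right,
    inner_e_e]
  by_cases h : k = m <;> simp [h]

set_option maxHeartbeats 3200000 in
/-- for `1 ≤ i ≤ n−1`, the `2n × 2n` operator matrix of the
elementary representation `π_{s_i}` (with entries `√(1−q^{2N+2})S`,
`S*√(1−q^{2N+2})`, `±q^{N+1}`, `±q^N` at the prescribed positions — rows and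
columns indexed `1, …, 2n` — and `δ_{kl}` elsewhere) is unitary:
`U*U = UU* = 1` in `M_{2n}(B(ℓ²(ℕ)))`. -/
theorem pi_si_matrix_unitary
    (q : ℝ) (hq0 : 0 < q) (hq1 : q < 1)
    (n : ℕ) (hn : 2 ≤ n) (i : ℕ) (hi1 : 1 ≤ i) (hi2 : i ≤ n - 1)
    (S : H →L[ℂ] H) (hS0 : S (e 0) = 0) (hS : ∀ m : ℕ, S (e (m + 1)) = e m)
    (R : H →L[ℂ] H) (hR : ∀ m : ℕ, R (e m) = ((Real.sqrt (1 - q ^ (2 * m + 2)) : ℝ) : ℂ) • e m)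
    (D₁ : H →L[ℂ] H) (hD₁ : ∀ m : ℕ, D₁ (e m) = ((q ^ (m + 1) : ℝ) : ℂ) • e m)
    (D₀ : H →L[ℂ] H) (hD₀ : ∀ m : ℕ, D₀ (e m) = ((q ^ m : ℝ) : ℂ) • e m)
    (U : Matrix (Fin (2 * n)) (Fin (2 * n)) (H →L[ℂ] H))
    (hU : ∀ k l : Fin (2 * n), U k l =
      if (k.1 + 1 = i ∧ l.1 + 1 = i) ∨ (k.1 + 1 = 2 * n - i ∧ l.1 + 1 = 2 * n - i) then
        R ∘L S
      else if (k.1 + 1 = i + 1 ∧ l.1 + 1 = i + 1) ∨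
          (k.1 + 1 = 2 * n - i + 1 ∧ l.1 + 1 = 2 * n - i + 1) then
        (ContinuousLinearMap.adjoint S) ∘L R
      else if k.1 + 1 = i ∧ l.1 + 1 = i + 1 then -D₁
      else if k.1 + 1 = i + 1 ∧ l.1 + 1 = i then D₀
      else if k.1 + 1 = 2 * n - i ∧ l.1 + 1 = 2 * n - i + 1 then D₁
      else if k.1 + 1 = 2 * n - i + 1 ∧ l.1 + 1 = 2 * n - i then -D₀
      else if k = l then 1 else 0) :
    U.conjTranspose * U = 1 ∧ U * U.conjTranspose = 1 := by
  have hT : ∀ m : ℕ, (ContinuousLinearMap.adjoint S) (e m) = e (m + 1) := adjoint_shift S hS0 hS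
  have hSS : ContinuousLinearMap.adjoint (ContinuousLinearMap.adjoint S) = S :=
    ContinuousLinearMap.adjoint_adjoint S
  have hRa : ContinuousLinearMap.adjoint R = R :=
    adjoint_diag R (fun m => Real.sqrt (1 - q ^ (2 * m + 2))) hR
  have hD₀a : ContinuousLinearMap.adjoint D₀ = D₀ := adjoint_diag D₀ (fun m => q ^ m) hD₀
  have hD₁a : ContinuousLinearMap.adjoint D₁ = D₁ := adjoint_diag D₁ (fun m => q ^ (m + 1)) hD₁
  have hqle : ∀ m : ℕ, q ^ m ≤ 1 := fun m => pow_le_one₀ hq0.le hq1.le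
  have hsq : ∀ m : ℕ, ((Real.sqrt (1 - q ^ (2 * m + 2)) : ℂ) *
      (Real.sqrt (1 - q ^ (2 * m + 2)) : ℂ)) = ((1 - q ^ (2 * m + 2) : ℝ) : ℂ) := by
    intro m
    rw [← Complex.ofReal_mul, Real.mul_self_sqrt (by linarith [hqle (2 * m + 2)])]
  -- the four operator identities
  have I1 : (ContinuousLinearMap.adjoint S ∘L R) ∘L (R ∘L S) + D₀ ∘L D₀ = 1 := by
    apply clm_ext
    intro m
    cases m with
    | zero =>
        simp [ContinuousLinearMap.comp_apply, ContinuousLinearMap.add_apply, hS0, hD₀]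
    | succ m =>
        simp only [ContinuousLinearMap.add_apply, ContinuousLinearMap.comp_apply, hS, hR, hD₀,
          map_smul, hT, ContinuousLinearMap.one_apply, smul_smul, hsq]
        rw [← add_smul]
        convert one_smul ℂ (e (m + 1)) using 2
        push_cast
        ring
  have I2 : D₀ ∘L (ContinuousLinearMap.adjoint S ∘L R) = (ContinuousLinearMap.adjoint S ∘L R) ∘L D₁ := by
    apply clm_ext
    intro m
    simp only [ContinuousLinearMap.comp_apply, hR, hD₁, map_smul, hT, hD₀, smul_smul]
    rw [mul_comm]
  have I3 : (R ∘L S) ∘L D₀ = D₁ ∘L (R ∘L S) := by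
    apply clm_ext
    intro m
    cases m with
    | zero => simp [ContinuousLinearMap.comp_apply, hS0, hD₀, map_smul]
    | succ m =>
        simp only [ContinuousLinearMap.comp_apply, hD₀, map_smul, hS, hR, hD₁, smul_smul]
        rw [mul_comm]
  have I4 : D₁ ∘L D₁ + (R ∘L S) ∘L (ContinuousLinearMap.adjoint S ∘L R) = 1 := by
    apply clm_ext
    intro m
    simp only [ContinuousLinearMap.add_apply, ContinuousLinearMap.comp_apply, hR, map_smul,
      hT, hS, hD₁, ContinuousLinearMap.one_apply, smul_smul, hsq]
    rw [← add_smul]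
    convert one_smul ℂ (e m) using 2
    push_cast
    ring
  -- Fin index elements
  obtain ⟨A1, hA1⟩ : ∃ x : Fin (2 * n), x.1 = i - 1 := ⟨⟨i - 1, by omega⟩, rfl⟩
  obtain ⟨A2, hA2⟩ : ∃ x : Fin (2 * n), x.1 = i := ⟨⟨i, by omega⟩, rfl⟩
  obtain ⟨B1, hB1⟩ : ∃ x : Fin (2 * n), x.1 = 2 * n - i - 1 := ⟨⟨2 * n - i - 1, by omega⟩, rfl⟩
  obtain ⟨B2, hB2⟩ : ∃ x : Fin (2 * n), x.1 = 2 * n - i := ⟨⟨2 * n - i, by omega⟩, rfl⟩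
  have d12 : A1 ≠ A2 := by rw [Ne, Fin.ext_iff, hA1, hA2]; omega
  have d13 : A1 ≠ B1 := by rw [Ne, Fin.ext_iff, hA1, hB1]; omega
  have d14 : A1 ≠ B2 := by rw [Ne, Fin.ext_iff, hA1, hB2]; omega
  have d23 : A2 ≠ B1 := by rw [Ne, Fin.ext_iff, hA2, hB1]; omega
  have d24 : A2 ≠ B2 := by rw [Ne, Fin.ext_iff, hA2, hB2]; omega
  have d34 : B1 ≠ B2 := by rw [Ne, Fin.ext_iff, hB1, hB2]; omega
  -- restated entry description
  have c1 : ∀ k : Fin (2 * n), (k.1 + 1 = i) ↔ k = A1 := by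
    intro k; rw [Fin.ext_iff, hA1]; omega
  have c2 : ∀ k : Fin (2 * n), (k.1 + 1 = i + 1) ↔ k = A2 := by
    intro k; rw [Fin.ext_iff, hA2]; omega
  have c3 : ∀ k : Fin (2 * n), (k.1 + 1 = 2 * n - i) ↔ k = B1 := by
    intro k; rw [Fin.ext_iff, hB1]; omega
  have c4 : ∀ k : Fin (2 * n), (k.1 + 1 = 2 * n - i + 1) ↔ k = B2 := by
    intro k; rw [Fin.ext_iff, hB2]; omega
  have hU' : ∀ k l : Fin (2 * n), U k l =
      if (k = A1 ∧ l = A1) ∨ (k = B1 ∧ l = B1) then R ∘L S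
      else if (k = A2 ∧ l = A2) ∨ (k = B2 ∧ l = B2) then ContinuousLinearMap.adjoint S ∘L R
      else if k = A1 ∧ l = A2 then -D₁
      else if k = A2 ∧ l = A1 then D₀
      else if k = B1 ∧ l = B2 then D₁
      else if k = B2 ∧ l = B1 then -D₀
      else if k = l then 1 else 0 := by
    intro k l
    rw [hU k l]
    simp only [c1, c2, c3, c4]
  have hrow : ∀ m l : Fin (2 * n), m ≠ A1 → m ≠ A2 → m ≠ B1 → m ≠ B2 →
      U m l = if m = l then 1 else 0 := by
    intro m l h1 h2 h3 h4
    rw [hU']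
    simp [h1, h2, h3, h4]
  have hcol : ∀ m l : Fin (2 * n), l ≠ A1 → l ≠ A2 → l ≠ B1 → l ≠ B2 →
      U m l = if m = l then 1 else 0 := by
    intro m l h1 h2 h3 h4
    rw [hU']
    simp [h1, h2, h3, h4]
  have I1' : D₀ ∘L D₀ + (ContinuousLinearMap.adjoint S ∘L R) ∘L (R ∘L S) = 1 := by
    rw [add_comm]; exact I1
  have I4' : (R ∘L S) ∘L (ContinuousLinearMap.adjoint S ∘L R) + D₁ ∘L D₁ = 1 := by
    rw [add_comm]; exact I4
  constructor
  · ext k l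
    rw [Matrix.mul_apply, Matrix.one_apply]
    simp only [Matrix.conjTranspose_apply]
    by_cases hk : k = A1 ∨ k = A2 ∨ k = B1 ∨ k = B2
    · by_cases hl : l = A1 ∨ l = A2 ∨ l = B1 ∨ l = B2
      · have hvanish : ∀ j : Fin (2 * n), j ∉ ({A1, A2, B1, B2} : Finset (Fin (2 * n))) →
            star (U j k) * U j l = 0 := by
          intro j hj
          simp only [Finset.mem_insert, Finset.mem_singleton, not_or] at hj
          rw [hrow j k hj.1 hj.2.1 hj.2.2.1 hj.2.2.2]
          have hjk : j ≠ k := by rcases hk with rfl | rfl | rfl | rfl <;> tauto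
          rw [if_neg hjk]
          simp
        rw [← Finset.sum_subset (Finset.subset_univ ({A1, A2, B1, B2} : Finset (Fin (2 * n))))
          (fun x _ hx => hvanish x hx)]
        rw [Finset.sum_insert (by simp [d12, d13, d14]),
          Finset.sum_insert (by simp [d23, d24]),
          Finset.sum_insert (by simp [d34]), Finset.sum_singleton]
        rcases hk with rfl | rfl | rfl | rfl <;> rcases hl with rfl | rfl | rfl | rfl <;>
          simp only [hU', d12, d13, d14, d23, d24, d34,
            d12.symm, d13.symm, d14.symm, d23.symm, d24.symm, d34.symm,
            ne_eq, not_false_eq_true, and_true, and_false, false_and, true_and, and_self,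
            or_false, false_or, or_self, if_true, if_false, ite_true, ite_false,
            if_neg, if_pos, eq_self_iff_true] <;>
          simp only [star_zero, zero_mul, mul_zero, star_neg, neg_mul, mul_neg, neg_neg,
            add_zero, zero_add, ContinuousLinearMap.star_eq_adjoint,
            ContinuousLinearMap.adjoint_comp, hSS, hRa, hD₀a, hD₁a,
            ContinuousLinearMap.mul_def] <;>
          first
            | rfl
            | rw [I1]
            | rw [I4]
            | rw [I1']
            | rw [I4']
            | (rw [I2]; first | exact neg_add_cancel _ | exact add_neg_cancel _)
            | (rw [I3]; first | exact neg_add_cancel _ | exact add_neg_cancel _)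
            | simp
      · push_neg at hl
        obtain ⟨e1, e2, e3, e4⟩ := hl
        have hkl : k ≠ l := by rcases hk with rfl | rfl | rfl | rfl <;> tauto
        simp [fun j => hcol j l e1 e2 e3 e4, hrow l k e1 e2 e3 e4, hkl, Ne.symm hkl,
          mul_ite, mul_one, mul_zero, Finset.sum_ite_eq']
    · push_neg at hk
      obtain ⟨e1, e2, e3, e4⟩ := hk
      by_cases hl : l = A1 ∨ l = A2 ∨ l = B1 ∨ l = B2
      · have hkl : k ≠ l := by rcases hl with rfl | rfl | rfl | rfl <;> tauto
        simp [fun j => hcol j k e1 e2 e3 e4, hrow k l e1 e2 e3 e4,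
          apply_ite (star : (H →L[ℂ] H) → (H →L[ℂ] H)), hkl, Ne.symm hkl,
          ite_mul, one_mul, zero_mul, Finset.sum_ite_eq]
      · push_neg at hl
        obtain ⟨f1, f2, f3, f4⟩ := hl
        simp [fun j => hcol j k e1 e2 e3 e4, fun j => hcol j l f1 f2 f3 f4,
          apply_ite (star : (H →L[ℂ] H) → (H →L[ℂ] H)),
          ite_mul, mul_ite, one_mul, zero_mul, mul_one, mul_zero, Finset.sum_ite_eq]
        by_cases hkl : k = l
        · simp [hkl]
        · simp [hkl, Ne.symm hkl]
  · ext k l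
    rw [Matrix.mul_apply, Matrix.one_apply]
    simp only [Matrix.conjTranspose_apply]
    by_cases hk : k = A1 ∨ k = A2 ∨ k = B1 ∨ k = B2
    · by_cases hl : l = A1 ∨ l = A2 ∨ l = B1 ∨ l = B2
      · have hvanish : ∀ j : Fin (2 * n), j ∉ ({A1, A2, B1, B2} : Finset (Fin (2 * n))) →
            U k j * star (U l j) = 0 := by
          intro j hj
          simp only [Finset.mem_insert, Finset.mem_singleton, not_or] at hj
          rw [hcol k j hj.1 hj.2.1 hj.2.2.1 hj.2.2.2]
          have hkj : k ≠ j := by rcases hk with rfl | rfl | rfl | rfl <;> tauto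
          rw [if_neg hkj]
          simp
        rw [← Finset.sum_subset (Finset.subset_univ ({A1, A2, B1, B2} : Finset (Fin (2 * n))))
          (fun x _ hx => hvanish x hx)]
        rw [Finset.sum_insert (by simp [d12, d13, d14]),
          Finset.sum_insert (by simp [d23, d24]),
          Finset.sum_insert (by simp [d34]), Finset.sum_singleton]
        rcases hk with rfl | rfl | rfl | rfl <;> rcases hl with rfl | rfl | rfl | rfl <;>
          simp only [hU', d12, d13, d14, d23, d24, d34,
            d12.symm, d13.symm, d14.symm, d23.symm, d24.symm, d34.symm,
            ne_eq, not_false_eq_true, and_true, and_false, false_and, true_and, and_self,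
            or_false, false_or, or_self, if_true, if_false, ite_true, ite_false,
            if_neg, if_pos, eq_self_iff_true] <;>
          simp only [star_zero, zero_mul, mul_zero, star_neg, neg_mul, mul_neg, neg_neg,
            add_zero, zero_add, ContinuousLinearMap.star_eq_adjoint,
            ContinuousLinearMap.adjoint_comp, hSS, hRa, hD₀a, hD₁a,
            ContinuousLinearMap.mul_def] <;>
          first
            | rfl
            | rw [I1]
            | rw [I4]
            | rw [I1']
            | rw [I4']
            | (rw [I2]; first | exact neg_add_cancel _ | exact add_neg_cancel _)
            | (rw [I3]; first | exact neg_add_cancel _ | exact add_neg_cancel _)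
            | simp
      · push_neg at hl
        obtain ⟨e1, e2, e3, e4⟩ := hl
        have hkl : k ≠ l := by rcases hk with rfl | rfl | rfl | rfl <;> tauto
        simp [fun j => hrow l j e1 e2 e3 e4, hcol k l e1 e2 e3 e4,
          apply_ite (star : (H →L[ℂ] H) → (H →L[ℂ] H)), hkl, Ne.symm hkl,
          mul_ite, mul_one, mul_zero, Finset.sum_ite_eq]
    · push_neg at hk
      obtain ⟨e1, e2, e3, e4⟩ := hk
      by_cases hl : l = A1 ∨ l = A2 ∨ l = B1 ∨ l = B2
      · have hkl : k ≠ l := by rcases hl with rfl | rfl | rfl | rfl <;> tauto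
        simp [fun j => hrow k j e1 e2 e3 e4, hcol l k e1 e2 e3 e4, hkl, Ne.symm hkl,
          ite_mul, one_mul, zero_mul, Finset.sum_ite_eq]
      · push_neg at hl
        obtain ⟨f1, f2, f3, f4⟩ := hl
        simp [fun j => hrow k j e1 e2 e3 e4, fun j => hrow l j f1 f2 f3 f4,
          apply_ite (star : (H →L[ℂ] H) → (H →L[ℂ] H)),
          ite_mul, mul_ite, one_mul, zero_mul, mul_one, mul_zero, Finset.sum_ite_eq]
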